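/- arXiv:2302.07771 — 8 statements merged into one kernel-verified Lean document; each statement's English description precedes it below -/
import Mathlib

section
/- Let S be a finite set of points in a metric space, let k ≥ 1 be an integer, and let d ≥ 0. If there exists a subset Y ⊆ S with |Y| ≥ k + 1 such that any two distinct points of Y are at distance greater than d, then every subset C ⊆ S with 1 ≤ |C| ≤ k satisfies r_C(S) > d/2; in particular, r*_k(S) > d/2. -/
/-- `setDist p C = min_{q ∈ C} dist p q` (as an infimum). -/
noncomputable def setDist {X : Type*} [MetricSpace X] (p : X) (C : Set X) : ℝ :=
  sInf ((dist p) '' C)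

/-- `rad S C = max_{p ∈ S} dist(p, C)`, the radius of `C` with respect to `S`. -/
noncomputable def rad {X : Type*} [MetricSpace X] (S C : Set X) : ℝ :=
  sSup ((fun p => setDist p C) '' S)

/-- `kcOpt S k = r*_k(S)`, the optimal `k`-center radius of `S`. -/
noncomputable def kcOpt {X : Type*} [MetricSpace X] (S : Set X) (k : ℕ) : ℝ :=
  sInf { r : ℝ | ∃ C : Set X, C ⊆ S ∧ C.Nonempty ∧ C.ncard ≤ k ∧ r = rad S C }

/-- If `S` contains at least `k+1` points at pairwise distance greater than `d`, then every
set of at most `k` centers has radius greater than `d/2`; in particular `r*_k(S) > d/2`. -/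
theorem stmt6 {X : Type*} [MetricSpace X] (S : Set X) (hS : S.Finite)
    (k : ℕ) (hk : 1 ≤ k) (d : ℝ) (hd : 0 ≤ d)
    (Y : Set X) (hYS : Y ⊆ S) (hYcard : k + 1 ≤ Y.ncard)
    (hsep : ∀ a ∈ Y, ∀ b ∈ Y, a ≠ b → d < dist a b) :
    (∀ C : Set X, C ⊆ S → C.Nonempty → C.ncard ≤ k → d / 2 < rad S C) ∧
    d / 2 < kcOpt S k := by
  have hYfin : Y.Finite := hS.subset hYS
  have hmain : ∀ C : Set X, C ⊆ S → C.Nonempty → C.ncard ≤ k → d / 2 < rad S C := by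
    intro C hCS hCne hCcard
    have hCfin : C.Finite := hS.subset hCS
    -- nearest point function
    have hnear : ∀ p : X, ∃ c ∈ C, ∀ q ∈ C, dist p c ≤ dist p q := fun p =>
      Set.exists_min_image C (dist p) hCfin hCne
    choose f hfC hfmin using hnear
    -- pigeonhole
    have hcard : C.ncard < Y.ncard := lt_of_le_of_lt hCcard (by omega)
    obtain ⟨a, ha, b, hb, hab, hfab⟩ :
        ∃ a ∈ Y, ∃ b ∈ Y, a ≠ b ∧ f a = f b := by
      classical
      have := Finset.exists_ne_map_eq_of_card_lt_of_maps_to (s := hYfin.toFinset)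
        (t := hCfin.toFinset) (f := f)
        (by rwa [Set.ncard_eq_toFinset_card C hCfin, Set.ncard_eq_toFinset_card Y hYfin] at hcard)
        (fun x hx => by simpa using hfC x)
      obtain ⟨a, ha, b, hb, hab, h⟩ := this
      exact ⟨a, by simpa using ha, b, by simpa using hb, hab, h⟩
    set c := f a with hc
    have hd1 : d < dist a c + dist b c := by
      calc d < dist a b := hsep a ha b hb hab
        _ ≤ dist a c + dist c b := dist_triangle a c b
        _ = dist a c + dist b c := by rw [dist_comm c b]
    -- one of dist a c, dist b c exceeds d/2
    have hone : d / 2 < dist a c ∨ d / 2 < dist b c := by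
      by_contra h
      push_neg at h
      linarith [h.1, h.2]
    -- setDist lower bound
    have hsd : ∀ p : X, dist p (f p) ≤ setDist p C := fun p =>
      le_csInf (hCne.image _) (by rintro r ⟨q, hq, rfl⟩; exact hfmin p q hq)
    have hbdd : BddAbove ((fun p => setDist p C) '' S) := (hS.image _).bddAbove
    have hrad : ∀ p ∈ S, setDist p C ≤ rad S C := fun p hp =>
      le_csSup hbdd ⟨p, hp, rfl⟩
    rcases hone with h | h
    · exact lt_of_lt_of_le h (le_trans (hsd a) (hrad a (hYS ha)))
    · have : dist b (f b) = dist b c := by rw [← hfab]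
      exact lt_of_lt_of_le h (le_trans (this ▸ hsd b) (hrad b (hYS hb)))
  refine ⟨hmain, ?_⟩
  set R := { r : ℝ | ∃ C : Set X, C ⊆ S ∧ C.Nonempty ∧ C.ncard ≤ k ∧ r = rad S C } with hR
  have hYne : Y.Nonempty := by
    rcases Set.eq_empty_or_nonempty Y with h | h
    · simp [h] at hYcard
    · exact h
  obtain ⟨y, hy⟩ := hYne
  have hRne : R.Nonempty := ⟨rad S {y}, {y}, by simp [Set.singleton_subset_iff, hYS hy], ⟨y, rfl⟩,
    by simpa using hk, rfl⟩
  have hRfin : R.Finite := by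
    have : R ⊆ (rad S) '' {C : Set X | C ⊆ S} := by
      rintro r ⟨C, hCS, _, _, rfl⟩; exact ⟨C, hCS, rfl⟩
    exact (hS.finite_subsets.image _).subset this
  have hmem : kcOpt S k ∈ R := hRne.csInf_mem hRfin
  obtain ⟨C, hCS, hCne, hCc, heq⟩ := hmem
  rw [show kcOpt S k = rad S C from heq]
  exact hmain C hCS hCne hCc
end

section
/- Let S be a finite set of points in a metric space, let 1 ≤ k < |S|, let ε ≥ 0 and β ≥ 0, let T ⊆ S be a nonempty subset with r_T(S) ≤ ε · r*_k(S), and let C ⊆ T be a nonempty subset with r_C(T) ≤ β · r*_k(T). Then r_C(S) ≤ (β + (β + 1)ε) · r*_k(S). In particular, a β-approximate k-center solution computed on an (ε, k)-coreset T is a (β + O(ε))-approximate k-center solution for S. -/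
section helpers

variable {X : Type*} [MetricSpace X]

lemma setDist_nonneg' (p : X) (C : Set X) : 0 ≤ setDist p C :=
  Real.sInf_nonneg (by rintro _ ⟨q, hq, rfl⟩; exact dist_nonneg)

lemma setDist_le' {C : Set X} (hC : C.Finite) (p : X) {q : X} (hq : q ∈ C) :
    setDist p C ≤ dist p q :=
  csInf_le (hC.image _).bddBelow ⟨q, hq, rfl⟩

lemma exists_nearest {C : Set X} (hC : C.Finite) (hCne : C.Nonempty) (p : X) :
    ∃ q ∈ C, setDist p C = dist p q := by
  have := (hCne.image (dist p)).csInf_mem (hC.image _)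
  obtain ⟨q, hq, hEq⟩ := this
  exact ⟨q, hq, hEq.symm⟩

lemma le_rad' {S : Set X} (hS : S.Finite) {p : X} (hp : p ∈ S) (C : Set X) :
    setDist p C ≤ rad S C :=
  le_csSup (hS.image _).bddAbove ⟨p, hp, rfl⟩

lemma rad_le' {S : Set X} (hSne : S.Nonempty) {C : Set X} {r : ℝ}
    (h : ∀ p ∈ S, setDist p C ≤ r) : rad S C ≤ r :=
  csSup_le (hSne.image _) (by rintro _ ⟨p, hp, rfl⟩; exact h p hp)

lemma rad_nonneg' {S : Set X} (hS : S.Finite) (hSne : S.Nonempty) (C : Set X) :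
    0 ≤ rad S C := by
  obtain ⟨p, hp⟩ := hSne
  exact le_trans (setDist_nonneg' p C) (le_rad' hS hp C)

lemma radset_nonempty {S : Set X} (hSne : S.Nonempty) {k : ℕ} (hk : 1 ≤ k) :
    { r : ℝ | ∃ C : Set X, C ⊆ S ∧ C.Nonempty ∧ C.ncard ≤ k ∧ r = rad S C }.Nonempty := by
  obtain ⟨s, hs⟩ := hSne
  exact ⟨rad S {s}, {s}, Set.singleton_subset_iff.mpr hs, Set.singleton_nonempty s,
    by simpa using hk, rfl⟩

lemma kcOpt_le' {S : Set X} (hS : S.Finite) (hSne : S.Nonempty) {k : ℕ} {C : Set X}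
    (hCS : C ⊆ S) (hCne : C.Nonempty) (hCk : C.ncard ≤ k) :
    kcOpt S k ≤ rad S C := by
  refine csInf_le ⟨0, ?_⟩ ⟨C, hCS, hCne, hCk, rfl⟩
  rintro r ⟨D, hDS, hDne, hDk, rfl⟩
  exact rad_nonneg' hS hSne D

lemma kcOpt_nonneg' {S : Set X} (hS : S.Finite) (hSne : S.Nonempty) (k : ℕ) :
    0 ≤ kcOpt S k :=
  Real.sInf_nonneg (by rintro r ⟨D, hDS, hDne, hDk, rfl⟩; exact rad_nonneg' hS hSne D)

end helpers

/-- A `β`-approximate `k`-center solution `C` computed on an `(ε,k)`-coreset `T` of `S`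
satisfies `r_C(S) ≤ (β + (β+1)ε)·r*_k(S)`. -/
theorem stmt8 {X : Type*} [MetricSpace X] (S : Set X) (hS : S.Finite)
    (k : ℕ) (hk1 : 1 ≤ k) (hk2 : k < S.ncard)
    (ε β : ℝ) (hε : 0 ≤ ε) (hβ : 0 ≤ β)
    (T : Set X) (hTS : T ⊆ S) (hTne : T.Nonempty)
    (hcore : rad S T ≤ ε * kcOpt S k)
    (C : Set X) (hCT : C ⊆ T) (hCne : C.Nonempty)
    (happrox : rad T C ≤ β * kcOpt T k) :
    rad S C ≤ (β + (β + 1) * ε) * kcOpt S k := by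
  have hT : T.Finite := hS.subset hTS
  have hC : C.Finite := hT.subset hCT
  have hSne : S.Nonempty := hTne.mono hTS
  -- Step A: rad S C ≤ rad S T + rad T C
  have stepA : rad S C ≤ rad S T + rad T C := by
    refine rad_le' hSne fun p hp => ?_
    obtain ⟨q, hqT, hq⟩ := exists_nearest hT hTne p
    obtain ⟨c, hcC, hc⟩ := exists_nearest hC hCne q
    calc setDist p C ≤ dist p c := setDist_le' hC p hcC
      _ ≤ dist p q + dist q c := dist_triangle p q c
      _ = setDist p T + setDist q C := by rw [hq, hc]
      _ ≤ rad S T + rad T C := add_le_add (le_rad' hS hp T) (le_rad' hT hqT C)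
  -- Step B: kcOpt T k ≤ kcOpt S k + rad S T
  have stepB : kcOpt T k ≤ kcOpt S k + rad S T := by
    have h1 : kcOpt T k - rad S T ≤ kcOpt S k := by
      refine le_csInf (radset_nonempty hSne hk1) ?_
      rintro r ⟨D, hDS, hDne, hDk, rfl⟩
      have hD : D.Finite := hS.subset hDS
      -- choose nearest point in T for each center
      have hch : ∀ c : X, ∃ t, t ∈ T ∧ (c ∈ D → dist c t = setDist c T) := by
        intro c
        by_cases hcD : c ∈ D
        · obtain ⟨t, htT, ht⟩ := exists_nearest hT hTne c
          exact ⟨t, htT, fun _ => ht.symm⟩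
        · obtain ⟨t, htT⟩ := hTne
          exact ⟨t, htT, fun h => absurd h hcD⟩
      choose f hfT hfd using hch
      have hT'sub : f '' D ⊆ T := by rintro _ ⟨c, hc, rfl⟩; exact hfT c
      have hT'ne : (f '' D).Nonempty := hDne.image f
      have hT'k : (f '' D).ncard ≤ k :=
        le_trans (Set.ncard_image_le hD) hDk
      have hle : kcOpt T k ≤ rad T (f '' D) :=
        kcOpt_le' hT hTne hT'sub hT'ne hT'k
      have hrad : rad T (f '' D) ≤ rad S D + rad S T := by
        refine rad_le' hTne fun p hp => ?_
        obtain ⟨c, hcD, hc⟩ := exists_nearest hD hDne p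
        calc setDist p (f '' D) ≤ dist p (f c) :=
              setDist_le' (hD.image f) p ⟨c, hcD, rfl⟩
          _ ≤ dist p c + dist c (f c) := dist_triangle p c (f c)
          _ = setDist p D + setDist c T := by rw [← hc, hfd c hcD]
          _ ≤ rad S D + rad S T :=
              add_le_add (le_rad' hS (hTS hp) D) (le_rad' hS (hDS hcD) T)
      linarith
    linarith
  -- Combine
  have hoptS : 0 ≤ kcOpt S k := kcOpt_nonneg' hS hSne k
  have h1 : rad T C ≤ β * (kcOpt S k + rad S T) :=
    le_trans happrox (by nlinarith)
  nlinarith [mul_nonneg hβ hoptS]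
end

section
/- Let (T_ℓ, par_ℓ) be a cover tree on a finite set S in a metric space (U, dist), and let p ∈ U. Then for every level ℓ with ℓ_min ≤ ℓ ≤ ℓ_max and every node u ∈ T_ℓ ∖ Q^p_ℓ, one has dist(p, u) > 2^{ℓ+1}. -/
/-- A cover tree on a finite nonempty set `S` in a metric space: for each level
`ℓ ∈ [lmin, lmax]` a finite set `T ℓ ⊆ S` (with `T lmax` a singleton), and for each
`ℓ ∈ [lmin, lmax)` a parent map `par ℓ : T ℓ → T (ℓ+1)`, such that
(1) `T (ℓ+1) ⊆ T ℓ`; (2) `dist u (par ℓ u) ≤ 2^(ℓ+1)`; (3) distinct points of `T ℓ` are at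
distance greater than `2^ℓ`. -/
structure CoverTree (X : Type*) [MetricSpace X] (S : Set X) where
  lmin : ℤ
  lmax : ℤ
  lmin_le_lmax : lmin ≤ lmax
  T : ℤ → Set X
  T_subset : ∀ ℓ : ℤ, lmin ≤ ℓ → ℓ ≤ lmax → T ℓ ⊆ S
  T_finite : ∀ ℓ : ℤ, lmin ≤ ℓ → ℓ ≤ lmax → (T ℓ).Finite
  T_top_singleton : ∃ x : X, T lmax = {x}
  par : ℤ → X → X
  nested : ∀ ℓ : ℤ, lmin ≤ ℓ → ℓ < lmax → T (ℓ + 1) ⊆ T ℓ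
  par_mem : ∀ ℓ : ℤ, lmin ≤ ℓ → ℓ < lmax → ∀ u ∈ T ℓ, par ℓ u ∈ T (ℓ + 1)
  par_dist : ∀ ℓ : ℤ, lmin ≤ ℓ → ℓ < lmax → ∀ u ∈ T ℓ, dist u (par ℓ u) ≤ (2 : ℝ) ^ (ℓ + 1)
  separated : ∀ ℓ : ℤ, lmin ≤ ℓ → ℓ ≤ lmax →
    ∀ u ∈ T ℓ, ∀ v ∈ T ℓ, u ≠ v → (2 : ℝ) ^ ℓ < dist u v

/-- For every point `p` and level `ℓ ∈ [lmin, lmax]`, every node `u ∈ T ℓ ∖ Q^p_ℓ`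
satisfies `dist p u > 2^(ℓ+1)`; here `Q` is the family of cover sets for `p`, given by
`Q lmax = T lmax` and the downward recursion
`Q ℓ = {u ∈ T ℓ | par ℓ u ∈ Q (ℓ+1) ∧ dist u p ≤ 2^(ℓ+1)}`. -/
theorem stmt9 {X : Type*} [MetricSpace X] {S : Set X} (ct : CoverTree X S) (p : X)
    (Q : ℤ → Set X)
    (hQtop : Q ct.lmax = ct.T ct.lmax)
    (hQrec : ∀ ℓ : ℤ, ct.lmin ≤ ℓ → ℓ < ct.lmax →
      Q ℓ = {u ∈ ct.T ℓ | ct.par ℓ u ∈ Q (ℓ + 1) ∧ dist u p ≤ (2 : ℝ) ^ (ℓ + 1)}) :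
    ∀ ℓ : ℤ, ct.lmin ≤ ℓ → ℓ ≤ ct.lmax →
      ∀ u ∈ ct.T ℓ \ Q ℓ, (2 : ℝ) ^ (ℓ + 1) < dist p u := by
  intro ℓ hmin hmax
  refine Int.le_induction_down
    (motive := fun n _ => ct.lmin ≤ n → ∀ u ∈ ct.T n \ Q n, (2 : ℝ) ^ (n + 1) < dist p u)
    ?_ ?_ ℓ hmax hmin
  · intro _ u hu
    exact absurd (hQtop ▸ hu.1) hu.2
  · intro n hn ih hmin' u hu
    have hlt : n - 1 < ct.lmax := by omega
    rw [dist_comm]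
    by_contra hle
    push_neg at hle
    have hQ := hQrec (n - 1) hmin' hlt
    have hupar : ct.par (n-1) u ∉ Q (n-1+1) := by
      intro hc
      exact hu.2 (hQ ▸ ⟨hu.1, hc, hle⟩)
    have hparT : ct.par (n-1) u ∈ ct.T (n-1+1) := ct.par_mem _ hmin' hlt u hu.1
    have hnn : n - 1 + 1 = n := by ring
    rw [hnn] at hupar hparT
    have hih := ih (by omega) _ ⟨hparT, hupar⟩
    have hpd := ct.par_dist (n-1) hmin' hlt u hu.1
    have htri := dist_triangle p u (ct.par (n-1) u)
    have h2 : (2:ℝ)^(n+1) = 2^(n-1+1) + 2^(n-1+1) := by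
      rw [show n + 1 = (n-1+1) + 1 by ring, zpow_add_one₀ (by norm_num)]
      ring
    rw [dist_comm p u] at htri
    nlinarith [hih, hpd, htri, hle]
end

section
/- Let (T_ℓ, par_ℓ) be a cover tree on a finite set S in a metric space (U, dist) of doubling dimension D. Then for every point p ∈ U and every level ℓ with ℓ_min ≤ ℓ ≤ ℓ_max, the cover set satisfies |Q^p_ℓ| ≤ 4^D. -/
/-- A metric space has doubling dimension `D` if every closed ball of radius `ρ > 0`
is contained in the union of at most `2^D` closed balls of radius `ρ/2`. -/
def HasDoublingDim (X : Type*) [MetricSpace X] (D : ℕ) : Prop :=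
  ∀ (x : X) (ρ : ℝ), 0 < ρ → ∃ F : Finset X,
    F.card ≤ 2 ^ D ∧ Metric.closedBall x ρ ⊆ ⋃ c ∈ F, Metric.closedBall c (ρ / 2)


lemma sep_card {X : Type*} [MetricSpace X] {D : ℕ} (hD : HasDoublingDim X D)
    (p : X) (R : ℝ) (hR : 0 < R) (A : Set X)
    (hA : A ⊆ Metric.closedBall p R)
    (hsep : ∀ u ∈ A, ∀ v ∈ A, u ≠ v → R / 2 < dist u v) :
    A.ncard ≤ 4 ^ D := by
  classical
  obtain ⟨F, hFcard, hFcov⟩ := hD p R hR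
  choose G hGcard hGcov using fun c : X => hD c (R / 2) (by linarith)
  set H : Finset X := F.biUnion G with hH
  have hHcard : H.card ≤ 4 ^ D := by
    calc H.card ≤ F.sum fun c => (G c).card := Finset.card_biUnion_le
    _ ≤ F.sum fun _ => 2 ^ D := Finset.sum_le_sum (fun c _ => hGcard c)
    _ = F.card * 2 ^ D := by simp [Finset.sum_const, mul_comm]
    _ ≤ 2 ^ D * 2 ^ D := Nat.mul_le_mul_right _ hFcard
    _ = 4 ^ D := by rw [← mul_pow]; norm_num
  have hchoice : ∀ a ∈ A, ∃ d, d ∈ H ∧ a ∈ Metric.closedBall d (R / 2 / 2) := by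
    intro a ha
    have h1 := hFcov (hA ha)
    simp only [Set.mem_iUnion, exists_prop] at h1
    obtain ⟨c, hc, hac⟩ := h1
    have h2 := hGcov c hac
    simp only [Set.mem_iUnion, exists_prop] at h2
    obtain ⟨d, hd, had⟩ := h2
    exact ⟨d, Finset.mem_biUnion.2 ⟨c, hc, hd⟩, had⟩
  choose! f hfH hfd using hchoice
  have hinj : Set.InjOn f A := by
    intro u hu v hv huv
    by_contra hne
    have h1 := Metric.mem_closedBall.1 (hfd u hu)
    have h2 := Metric.mem_closedBall.1 (hfd v hv)
    have hle : dist u v ≤ R / 2 := by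
      calc dist u v ≤ dist u (f u) + dist (f u) v := dist_triangle _ _ _
      _ = dist u (f u) + dist v (f v) := by rw [huv, dist_comm (f v) v]
      _ ≤ R / 2 / 2 + R / 2 / 2 := by linarith
      _ = R / 2 := by ring
    linarith [hsep u hu v hv hne]
  have hsub : f '' A ⊆ (H : Set X) := by
    rintro _ ⟨a, ha, rfl⟩; exact hfH a ha
  have hfin : (f '' A).Finite := H.finite_toSet.subset hsub
  calc A.ncard = (f '' A).ncard := (Set.ncard_image_of_injOn hinj).symm
  _ ≤ (H : Set X).ncard := Set.ncard_le_ncard hsub H.finite_toSet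
  _ = H.card := Set.ncard_coe_finset H
  _ ≤ 4 ^ D := hHcard

/-- In a metric space of doubling dimension `D`, for every point `p` and every level
`ℓ ∈ [lmin, lmax]`, the cover set satisfies `|Q^p_ℓ| ≤ 4^D`. -/
theorem stmt10 {X : Type*} [MetricSpace X] {S : Set X} {D : ℕ} (hD : HasDoublingDim X D)
    (ct : CoverTree X S) (p : X)
    (Q : ℤ → Set X)
    (hQtop : Q ct.lmax = ct.T ct.lmax)
    (hQrec : ∀ ℓ : ℤ, ct.lmin ≤ ℓ → ℓ < ct.lmax →
      Q ℓ = {u ∈ ct.T ℓ | ct.par ℓ u ∈ Q (ℓ + 1) ∧ dist u p ≤ (2 : ℝ) ^ (ℓ + 1)}) :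
    ∀ ℓ : ℤ, ct.lmin ≤ ℓ → ℓ ≤ ct.lmax → (Q ℓ).ncard ≤ 4 ^ D := by
  intro ℓ hlo hhi
  rcases eq_or_lt_of_le hhi with heq | hlt
  · subst heq
    obtain ⟨x, hx⟩ := ct.T_top_singleton
    rw [hQtop, hx]
    simp only [Set.ncard_singleton]
    exact Nat.one_le_iff_ne_zero.2 (pow_ne_zero _ (by norm_num))
  · have hR : (0 : ℝ) < (2 : ℝ) ^ (ℓ + 1) := zpow_pos (by norm_num) _
    apply sep_card hD p ((2:ℝ) ^ (ℓ + 1)) hR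
    · intro u hu
      rw [hQrec ℓ hlo hlt] at hu
      exact Metric.mem_closedBall.2 hu.2.2
    · intro u hu v hv hne
      rw [hQrec ℓ hlo hlt] at hu hv
      have : (2:ℝ) ^ (ℓ+1) / 2 = (2:ℝ) ^ ℓ := by
        rw [zpow_add_one₀ (by norm_num : (2:ℝ) ≠ 0)]; ring
      rw [this]
      exact ct.separated ℓ hlo hhi u hu.1 v hv.1 hne
end

section
/- Correctness of the insertion level: let (T_ℓ, par_ℓ) be a cover tree on a finite set S in a metric space (U, dist), let p ∈ U, and let ℓ be a level with ℓ_min ≤ ℓ < ℓ_max such that (a) dist(p, u) > 2^ℓ for every u ∈ Q^p_ℓ, and (b) there exists v ∈ Q^p_{ℓ+1} with dist(p, v) ≤ 2^{ℓ+1}. Then dist(p, u) > 2^ℓ for EVERY u ∈ T_ℓ (so that T_ℓ ∪ {p} satisfies the level-ℓ separation property dist > 2^ℓ between distinct points), and v ∈ T_{ℓ+1} satisfies dist(p, v) ≤ 2^{ℓ+1} (so that v is a valid parent for p at level ℓ). -/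
/-- Correctness of the insertion level: if (a) `dist p u > 2^ℓ` for every `u ∈ Q^p_ℓ`,
and (b) some `v ∈ Q^p_{ℓ+1}` satisfies `dist p v ≤ 2^(ℓ+1)`, then `dist p u > 2^ℓ` for
every `u ∈ T ℓ` (so `T ℓ ∪ {p}` satisfies the level-`ℓ` separation property), and
`v ∈ T (ℓ+1)` with `dist p v ≤ 2^(ℓ+1)` (so `v` is a valid parent for `p` at level `ℓ`). -/
theorem stmt14 {X : Type*} [MetricSpace X] {S : Set X} (ct : CoverTree X S) (p : X)
    (Q : ℤ → Set X)
    (hQtop : Q ct.lmax = ct.T ct.lmax)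
    (hQrec : ∀ ℓ : ℤ, ct.lmin ≤ ℓ → ℓ < ct.lmax →
      Q ℓ = {u ∈ ct.T ℓ | ct.par ℓ u ∈ Q (ℓ + 1) ∧ dist u p ≤ (2 : ℝ) ^ (ℓ + 1)})
    (ℓ : ℤ) (h1 : ct.lmin ≤ ℓ) (h2 : ℓ < ct.lmax)
    (ha : ∀ u ∈ Q ℓ, (2 : ℝ) ^ ℓ < dist p u)
    (v : X) (hv : v ∈ Q (ℓ + 1)) (hvd : dist p v ≤ (2 : ℝ) ^ (ℓ + 1)) :
    (∀ u ∈ ct.T ℓ, (2 : ℝ) ^ ℓ < dist p u) ∧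
    v ∈ ct.T (ℓ + 1) ∧ dist p v ≤ (2 : ℝ) ^ (ℓ + 1) := by
  -- Key lemma: every u ∈ T ℓ' with dist u p ≤ 2^(ℓ'+1) lies in Q ℓ'.
  have key : ∀ n : ℕ, ∀ ℓ' : ℤ, ct.lmin ≤ ℓ' → ℓ' + n = ct.lmax →
      ∀ u ∈ ct.T ℓ', dist u p ≤ (2 : ℝ) ^ (ℓ' + 1) → u ∈ Q ℓ' := by
    intro n
    induction n with
    | zero =>
      intro ℓ' _ hmax u hu _
      simp only [Nat.cast_zero, add_zero] at hmax
      subst hmax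
      rw [hQtop]; exact hu
    | succ k ih =>
      intro ℓ' hmin hmax u hu hd
      have hlt : ℓ' < ct.lmax := by
        have : (0 : ℤ) < (k + 1 : ℕ) := by positivity
        omega
      rw [hQrec ℓ' hmin hlt]
      refine ⟨hu, ?_, hd⟩
      have hpar := ct.par_mem ℓ' hmin hlt u hu
      have hpd := ct.par_dist ℓ' hmin hlt u hu
      apply ih (ℓ' + 1) (by omega) (by push_cast at hmax ⊢; omega) _ hpar
      calc dist (ct.par ℓ' u) p ≤ dist (ct.par ℓ' u) u + dist u p := dist_triangle _ _ _
        _ ≤ (2 : ℝ) ^ (ℓ' + 1) + (2 : ℝ) ^ (ℓ' + 1) := by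
            rw [dist_comm]; exact add_le_add hpd hd
        _ = (2 : ℝ) ^ (ℓ' + 1 + 1) := by rw [zpow_add_one₀ (two_ne_zero) (ℓ' + 1)]; ring
  have hQsub : ∀ ℓ' : ℤ, ct.lmin ≤ ℓ' → ℓ' ≤ ct.lmax → Q ℓ' ⊆ ct.T ℓ' := by
    intro ℓ' hmin hmax u hu
    rcases lt_or_eq_of_le hmax with h | h
    · rw [hQrec ℓ' hmin h] at hu; exact hu.1
    · subst h; rw [hQtop] at hu; exact hu
  refine ⟨?_, hQsub (ℓ + 1) (by omega) (by omega) hv, hvd⟩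
  intro u hu
  by_contra hle
  push_neg at hle
  have huQ : u ∈ Q ℓ := by
    apply key (ct.lmax - ℓ).toNat ℓ h1 (by omega) u hu
    rw [dist_comm]
    calc dist p u ≤ (2 : ℝ) ^ ℓ := hle
      _ ≤ (2 : ℝ) ^ (ℓ + 1) := by
          apply zpow_le_zpow_right₀ (by norm_num) (by omega)
  exact absurd (ha u huQ) (not_lt.mpr hle)
end

section
/- Descendant count bound: let (T_ℓ, par_ℓ) be a cover tree on a finite set S in a metric space of doubling dimension D. For levels ℓ ≤ ℓ' (both in [ℓ_min, ℓ_max]) and a node v ∈ T_{ℓ'}, the set of descendants of v at level ℓ, namely { u ∈ T_ℓ : (par_{ℓ'-1} ∘ ⋯ ∘ par_ℓ)(u) = v }, has cardinality at most 2^{(ℓ' − ℓ + 2)·D}. -/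
/-- `ancAux par ℓ n u` is the ancestor of `u` obtained by composing the parent maps
`par (ℓ+n-1) ∘ ⋯ ∘ par ℓ`, i.e. climbing `n` levels starting from level `ℓ`. -/
def ancAux {X : Type*} (par : ℤ → X → X) (ℓ : ℤ) : ℕ → X → X
  | 0, u => u
  | n + 1, u => par (ℓ + n) (ancAux par ℓ n u)


lemma anc_mem_dist {X : Type*} [MetricSpace X] {S : Set X} (ct : CoverTree X S)
    (ℓ : ℤ) (h1 : ct.lmin ≤ ℓ) :
    ∀ n : ℕ, ℓ + n ≤ ct.lmax → ∀ u ∈ ct.T ℓ,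
      ancAux ct.par ℓ n u ∈ ct.T (ℓ + n) ∧
      dist u (ancAux ct.par ℓ n u) ≤ (2 : ℝ) ^ (ℓ + n + 1) - 2 ^ (ℓ + 1) := by
  intro n
  induction n with
  | zero =>
    intro _ u hu
    simpa [ancAux] using hu
  | succ n ih =>
    intro hle u hu
    have hle' : ℓ + n < ct.lmax := by push_cast at hle ⊢; omega
    obtain ⟨hmem, hdist⟩ := ih (le_of_lt hle') u hu
    have hlb : ct.lmin ≤ ℓ + n := le_trans h1 (le_add_of_nonneg_right (Int.natCast_nonneg n))
    constructor
    · have := ct.par_mem (ℓ + n) hlb hle' _ hmem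
      have heq : (ℓ : ℤ) + (n + 1 : ℕ) = (ℓ + n) + 1 := by push_cast; ring
      rw [heq]
      exact this
    · have hp := ct.par_dist (ℓ + n) hlb hle' _ hmem
      have htri := dist_triangle u (ancAux ct.par ℓ n u) (ancAux ct.par ℓ (n + 1) u)
      have : ancAux ct.par ℓ (n + 1) u = ct.par (ℓ + n) (ancAux ct.par ℓ n u) := rfl
      rw [this] at htri ⊢
      have heq : (ℓ : ℤ) + (n + 1 : ℕ) + 1 = (ℓ + n + 1) + 1 := by push_cast; ring
      rw [heq]
      have h2 : ((2:ℝ)) ^ ((ℓ + n + 1) + 1) = 2 * 2 ^ (ℓ + n + 1) := by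
        rw [zpow_add_one₀ (by norm_num : (2:ℝ) ≠ 0)]; ring
      calc dist u (ct.par (ℓ + n) (ancAux ct.par ℓ n u))
          ≤ dist u (ancAux ct.par ℓ n u) + dist (ancAux ct.par ℓ n u) (ct.par (ℓ + n) (ancAux ct.par ℓ n u)) := htri
        _ ≤ ((2:ℝ) ^ (ℓ + n + 1) - 2 ^ (ℓ + 1)) + 2 ^ (ℓ + n + 1) := add_le_add hdist hp
        _ ≤ (2:ℝ) ^ ((ℓ + n + 1) + 1) - 2 ^ (ℓ + 1) := le_of_eq (by rw [h2]; ring)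

lemma cover_iter {X : Type*} [MetricSpace X] {D : ℕ} (hD : HasDoublingDim X D)
    (x : X) (ρ : ℝ) (hρ : 0 < ρ) : ∀ m : ℕ, ∃ F : Finset X,
    F.card ≤ 2 ^ (D * m) ∧ Metric.closedBall x ρ ⊆ ⋃ c ∈ F, Metric.closedBall c (ρ / 2 ^ m) := by
  classical
  intro m
  induction m with
  | zero =>
    refine ⟨{x}, by simp, ?_⟩
    simp
  | succ m ih =>
    obtain ⟨F, hcard, hcov⟩ := ih
    have hρm : 0 < ρ / 2 ^ m := by positivity
    have hG : ∀ c : X, ∃ G : Finset X, G.card ≤ 2 ^ D ∧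
        Metric.closedBall c (ρ / 2 ^ m) ⊆ ⋃ c' ∈ G, Metric.closedBall c' (ρ / 2 ^ m / 2) :=
      fun c => hD c (ρ / 2 ^ m) hρm
    choose G hGcard hGcov using hG
    refine ⟨F.biUnion G, ?_, ?_⟩
    · calc (F.biUnion G).card ≤ ∑ c ∈ F, (G c).card := Finset.card_biUnion_le
        _ ≤ F.card * 2 ^ D := Finset.sum_le_card_nsmul _ _ _ (fun c _ => hGcard c)
        _ ≤ 2 ^ (D * m) * 2 ^ D := Nat.mul_le_mul_right _ hcard
        _ = 2 ^ (D * (m + 1)) := by ring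
    · intro y hy
      obtain ⟨_, ⟨c, rfl⟩, _, ⟨hc, rfl⟩, hyc⟩ := hcov hy
      obtain ⟨_, ⟨c', rfl⟩, _, ⟨hc', rfl⟩, hyc'⟩ := hGcov c hyc
      have : y ∈ Metric.closedBall c' (ρ / 2 ^ (m + 1)) := by
        convert hyc' using 2; ring
      exact Set.mem_biUnion (Finset.mem_biUnion.mpr ⟨c, hc, hc'⟩) this

lemma packing {X : Type*} [MetricSpace X] {D : ℕ} (hD : HasDoublingDim X D)
    (x : X) (ρ : ℝ) (hρ : 0 < ρ) (m : ℕ) (P : Set X)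
    (hP : P ⊆ Metric.closedBall x ρ)
    (hsep : ∀ u ∈ P, ∀ u' ∈ P, u ≠ u' → 2 * (ρ / 2 ^ m) < dist u u') :
    P.ncard ≤ 2 ^ (D * m) := by
  obtain ⟨F, hcard, hcov⟩ := cover_iter hD x ρ hρ m
  have hpick : ∀ u ∈ P, ∃ c ∈ F, u ∈ Metric.closedBall c (ρ / 2 ^ m) := by
    intro u hu
    obtain ⟨_, ⟨c, rfl⟩, _, ⟨hc, rfl⟩, huc⟩ := hcov (hP hu)
    exact ⟨c, hc, huc⟩
  classical
  set f : X → X := fun u => if h : u ∈ P then (hpick u h).choose else x with hf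
  have hfmem : ∀ u ∈ P, f u ∈ (F : Set X) := by
    intro u hu; simp only [hf, dif_pos hu]; exact (hpick u hu).choose_spec.1
  have hfball : ∀ u ∈ P, u ∈ Metric.closedBall (f u) (ρ / 2 ^ m) := by
    intro u hu; simp only [hf, dif_pos hu]; exact (hpick u hu).choose_spec.2
  have hinj : Set.InjOn f P := by
    intro u hu u' hu' he
    by_contra hne
    have h1 := hfball u hu
    have h2 := hfball u' hu'
    rw [Metric.mem_closedBall] at h1 h2
    rw [he] at h1
    have : dist u u' ≤ 2 * (ρ / 2 ^ m) := by
      calc dist u u' ≤ dist u (f u') + dist (f u') u' := dist_triangle _ _ _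
        _ ≤ ρ / 2 ^ m + ρ / 2 ^ m := by
            exact add_le_add h1 (by rw [dist_comm]; exact h2)
        _ = 2 * (ρ / 2 ^ m) := by ring
    exact absurd this (not_le.mpr (hsep u hu u' hu' hne))
  calc P.ncard ≤ (F : Set X).ncard := Set.ncard_le_ncard_of_injOn f hfmem hinj F.finite_toSet
    _ = F.card := by simp [Set.ncard_coe_finset]
    _ ≤ 2 ^ (D * m) := hcard

/-- Descendant count bound: in a metric space of doubling dimension `D`, for levels
`ℓ ≤ ℓ'` in `[lmin, lmax]` and `v ∈ T ℓ'`, the set of descendants of `v` at level `ℓ`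
has cardinality at most `2^{(ℓ'−ℓ+2)·D}`. -/
theorem stmt16 {X : Type*} [MetricSpace X] {S : Set X} {D : ℕ} (hD : HasDoublingDim X D)
    (ct : CoverTree X S)
    (ℓ ℓ' : ℤ) (h1 : ct.lmin ≤ ℓ) (h2 : ℓ ≤ ℓ') (h3 : ℓ' ≤ ct.lmax)
    (v : X) (hv : v ∈ ct.T ℓ') :
    ({u ∈ ct.T ℓ | ancAux ct.par ℓ (ℓ' - ℓ).toNat u = v}).ncard
      ≤ 2 ^ (((ℓ' - ℓ).toNat + 2) * D) := by
  classical
  set n : ℕ := (ℓ' - ℓ).toNat with hn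
  have hnℓ : (n : ℤ) = ℓ' - ℓ := Int.toNat_of_nonneg (by omega)
  set ρ : ℝ := (2 : ℝ) ^ (ℓ' + 1) with hρdef
  have hρ : (0:ℝ) < ρ := by positivity
  set P : Set X := {u ∈ ct.T ℓ | ancAux ct.par ℓ n u = v} with hP
  have hsub : P ⊆ Metric.closedBall v ρ := by
    intro u hu
    obtain ⟨huT, hanc⟩ := hu
    have hle : ℓ + (n : ℤ) ≤ ct.lmax := by omega
    obtain ⟨_, hdist⟩ := anc_mem_dist ct ℓ h1 n hle u huT
    rw [hanc] at hdist
    rw [Metric.mem_closedBall]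
    have heq2 : (2:ℝ) ^ (ℓ + (n:ℤ) + 1) = ρ := by rw [hρdef]; congr 1; omega
    rw [heq2] at hdist
    have h0 : (0:ℝ) < (2:ℝ) ^ (ℓ + 1 : ℤ) := by positivity
    linarith
  have hsep : ∀ u ∈ P, ∀ u' ∈ P, u ≠ u' → 2 * (ρ / 2 ^ (n + 2)) < dist u u' := by
    intro u hu u' hu' hne
    have key : 2 * (ρ / 2 ^ (n + 2)) = (2:ℝ) ^ ℓ := by
      have e1 : ((2:ℝ) ^ (n + 2) : ℝ) = (2:ℝ) ^ ((n:ℤ) + 2) := by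
        norm_cast
      rw [hρdef, e1, ← zpow_sub₀ (by norm_num : (2:ℝ) ≠ 0),
        show ℓ' + 1 - ((n:ℤ) + 2) = ℓ - 1 from by omega]
      have e2 : (2:ℝ) ^ ℓ = 2 ^ (ℓ - 1) * 2 := by
        rw [← zpow_add_one₀ (by norm_num : (2:ℝ) ≠ 0)]; congr 1; ring
      rw [e2]; ring
    rw [key]
    exact ct.separated ℓ h1 (le_trans h2 h3) u hu.1 u' hu'.1 hne
  have := packing hD v ρ hρ (n + 2) P hsub hsep
  calc P.ncard ≤ 2 ^ (D * (n + 2)) := this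
    _ = 2 ^ ((n + 2) * D) := by rw [mul_comm]
end

section
/- Matroid substitution along a partition: let M be a matroid on a finite ground set S, let S₁, …, S_h be a partition of S, and for each i let B_i be a maximal independent subset of S_i. Then for every independent set A of M there exist an independent set A' ⊆ ⋃_{i=1}^h B_i and a bijection f : A → A' such that for every a ∈ A, the points a and f(a) belong to the same part S_i of the partition. -/
open Set

/-- Matroid substitution along a partition: if `S₁, …, S_h` is a partition of the ground
set of `M` and each `B_i` is a maximal independent subset of `S_i`, then every independent
set `A` can be replaced by an independent set `A' ⊆ ⋃ i, B_i` via a bijection `f : A → A'`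
mapping each point to a point in the same part of the partition. -/
theorem stmt18 {α : Type*} (M : Matroid α) (hfin : M.E.Finite)
    (h : ℕ) (Sp : Fin h → Set α)
    (hdisj : ∀ i j, i ≠ j → Disjoint (Sp i) (Sp j))
    (hcover : (⋃ i, Sp i) = M.E)
    (B : Fin h → Set α)
    (hBsub : ∀ i, B i ⊆ Sp i)
    (hBind : ∀ i, M.Indep (B i))
    (hBmax : ∀ i, ∀ B'' : Set α, M.Indep B'' → B i ⊆ B'' → B'' ⊆ Sp i → B'' = B i)
    (A : Set α) (hA : M.Indep A) :
    ∃ A' : Set α, A' ⊆ (⋃ i, B i) ∧ M.Indep A' ∧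
      ∃ f : α → α, Set.BijOn f A A' ∧
        ∀ a ∈ A, ∃ i : Fin h, a ∈ Sp i ∧ f a ∈ Sp i := by
  classical
  have hSpE : ∀ i, Sp i ⊆ M.E := fun i => hcover ▸ subset_iUnion Sp i
  have hBbasis : ∀ i, M.IsBasis (B i) (Sp i) := fun i =>
    (Matroid.isBasis_iff (hSpE i)).2 ⟨hBind i, hBsub i,
      fun J hJ h1 h2 => (hBmax i J hJ h1 h2).symm⟩
  -- exchange lemma
  have key : ∀ (A : Set α), M.Indep A → ∀ a ∈ A, ∀ i, a ∈ Sp i → a ∉ B i →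
      ∃ b ∈ B i, b ∉ A ∧ M.Indep (insert b (A \ {a})) := by
    intro A hA a haA i haSp haB
    have hA' : M.Indep (A \ {a}) := hA.subset diff_subset
    have hXE : (A \ {a}) ∪ B i ⊆ M.E :=
      union_subset (diff_subset.trans hA.subset_ground) (hBind i).subset_ground
    obtain ⟨J, hJ, hsubJ⟩ := hA'.subset_isBasis_of_subset subset_union_left hXE
    by_cases hne : J = A \ {a}
    · exfalso
      have h1 : a ∈ M.closure (B i) := (hBbasis i).subset_closure haSp
      have h2 : M.closure (B i) ⊆ M.closure ((A \ {a}) ∪ B i) :=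
        M.closure_subset_closure subset_union_right
      have h3 : M.closure ((A \ {a}) ∪ B i) = M.closure J := hJ.closure_eq_closure.symm
      have h4 := hA.notMem_closure_diff_of_mem haA
      rw [hne] at h3
      exact h4 (h3 ▸ h2 h1)
    · obtain ⟨b, hbJ, hbA⟩ := exists_of_ssubset (hsubJ.ssubset_of_ne (Ne.symm hne))
      have hbB : b ∈ B i := (hJ.subset hbJ).resolve_left hbA
      have hba : b ≠ a := fun hb => haB (hb ▸ hbB)
      exact ⟨b, hbB, fun hb => hbA ⟨hb, hba⟩,
        hJ.indep.subset (insert_subset hbJ hsubJ)⟩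
  suffices H : ∀ n (A : Set α), M.Indep A → (A \ ⋃ i, B i).ncard = n →
      ∃ A' : Set α, A' ⊆ (⋃ i, B i) ∧ M.Indep A' ∧
        ∃ f : α → α, Set.BijOn f A A' ∧
          ∀ a ∈ A, ∃ i : Fin h, a ∈ Sp i ∧ f a ∈ Sp i by
    exact H _ A hA rfl
  intro n
  induction n using Nat.strong_induction_on with
  | _ n IH =>
    intro A hA hn
    by_cases hsub : A ⊆ ⋃ i, B i
    · refine ⟨A, hsub, hA, id, bijOn_id A, fun a haA => ?_⟩
      obtain ⟨i, hi⟩ := mem_iUnion.1 (hcover ▸ hA.subset_ground haA)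
      exact ⟨i, hi, hi⟩
    · obtain ⟨a, haA, haB⟩ := not_subset.1 hsub
      obtain ⟨i, haSp⟩ := mem_iUnion.1 (hcover ▸ hA.subset_ground haA)
      have haBi : a ∉ B i := fun hx => haB (mem_iUnion.2 ⟨i, hx⟩)
      obtain ⟨b, hbB, hbA, hind⟩ := key A hA a haA i haSp haBi
      have hbU : b ∈ ⋃ i, B i := mem_iUnion.2 ⟨i, hbB⟩
      set A₂ := insert b (A \ {a}) with hA₂
      have hA₂sub : A \ {a} ⊆ A₂ := subset_insert _ _
      have hdiff : A₂ \ ⋃ i, B i = (A \ ⋃ i, B i) \ {a} := by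
        ext x
        simp only [hA₂, mem_diff, mem_insert_iff, mem_singleton_iff]
        constructor
        · rintro ⟨rfl | ⟨hxA, hxa⟩, hxB⟩
          · exact absurd hbU hxB
          · exact ⟨⟨hxA, hxB⟩, hxa⟩
        · rintro ⟨⟨hxA, hxB⟩, hxa⟩
          exact ⟨Or.inr ⟨hxA, hxa⟩, hxB⟩
      have hAfin : (A \ ⋃ i, B i).Finite :=
        (hfin.subset hA.subset_ground).subset diff_subset
      have hcard : (A₂ \ ⋃ i, B i).ncard < n := by
        rw [hdiff, ← hn]
        exact Set.ncard_diff_singleton_lt_of_mem ⟨haA, haB⟩ hAfin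
      obtain ⟨A', hA'sub, hA'ind, g, hg, hgpart⟩ := IH _ hcard A₂ hind rfl
      have hφ : Set.BijOn (fun x => if x = a then b else x) A A₂ := by
        refine ⟨fun x hx => ?_, fun x hx y hy hxy => ?_, fun z hz => ?_⟩
        · dsimp only
          split_ifs with hxa
          · exact mem_insert _ _
          · exact hA₂sub ⟨hx, hxa⟩
        · dsimp only at hxy
          by_cases hxa : x = a <;> by_cases hya : y = a
          · rw [hxa, hya]
          · rw [if_pos hxa, if_neg hya] at hxy
            exact absurd (hxy.symm ▸ hy) hbA
          · rw [if_neg hxa, if_pos hya] at hxy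
            exact absurd (hxy ▸ hx) hbA
          · rwa [if_neg hxa, if_neg hya] at hxy
        · rcases hz with rfl | ⟨hzA, hza⟩
          · exact ⟨a, haA, by simp⟩
          · have hza' : z ≠ a := fun hq => hza (by simp [hq])
            exact ⟨z, hzA, by simp [hza']⟩
      refine ⟨A', hA'sub, hA'ind, fun x => if x = a then g b else g x,
        (hg.comp hφ).congr (fun x _ => by by_cases hxa : x = a <;> simp [Function.comp, hxa]), ?_⟩
      intro x hx
      by_cases hxa : x = a
      · subst hxa
        obtain ⟨j, hbj, hgbj⟩ := hgpart b (mem_insert _ _)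
        have hij : i = j := by
          by_contra hne
          exact (hdisj i j hne).le_bot ⟨hBsub i hbB, hbj⟩
        simp only [if_pos rfl]
        exact ⟨i, haSp, hij ▸ hgbj⟩
      · obtain ⟨j, hxj, hgxj⟩ := hgpart x (hA₂sub ⟨hx, hxa⟩)
        simp only [if_neg hxa]
        exact ⟨j, hxj, hgxj⟩
end

section
/- Matroid center via partition bases: let M be a matroid on a finite nonempty ground set S of points of a metric space, let S₁, …, S_h be a partition of S, and suppose there exist points p₁, …, p_h and δ ≥ 0 such that dist(q, p_i) ≤ δ for every q ∈ S_i and every i. For each i let B_i be a maximal independent subset of S_i. Then for every nonempty independent set C of M there exists a nonempty independent set C' ⊆ ⋃_{i=1}^h B_i such that r_{C'}(S) ≤ r_C(S) + 2δ. In particular, taking C an optimal matroid-center solution and δ = ε · r*(M), the set Q = ⋃_i B_i contains an independent set C' with r_{C'}(S) ≤ (1 + 2ε) · r*(M). -/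
/-- `matroidOpt M = r*(M)`, the optimal matroid-center radius:
the minimum of `rad M.E C` over nonempty independent sets `C` of `M`. -/
noncomputable def matroidOpt {X : Type*} [MetricSpace X] (M : Matroid X) : ℝ :=
  sInf { r : ℝ | ∃ C : Set X, M.Indep C ∧ C.Nonempty ∧ r = rad M.E C }

/-- Matroid center via partition bases: if `S₁, …, S_h` is a partition of the ground set
`S` of `M`, each part `S_i` has all its points within distance `δ` of a point `p_i`, and
`B_i` is a maximal independent subset of `S_i`, then for every nonempty independent set
`C` there is a nonempty independent set `C' ⊆ ⋃ i, B_i` with `r_{C'}(S) ≤ r_C(S) + 2δ`.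
In particular, taking `C` an optimal matroid-center solution and `δ = ε·r*(M)`, the set
`⋃ i, B_i` contains an independent `C'` with `r_{C'}(S) ≤ (1+2ε)·r*(M)`. -/
theorem stmt19 {X : Type*} [MetricSpace X] (M : Matroid X)
    (hfin : M.E.Finite) (hne : M.E.Nonempty)
    (h : ℕ) (Sp : Fin h → Set X)
    (hdisj : ∀ i j, i ≠ j → Disjoint (Sp i) (Sp j))
    (hcover : (⋃ i, Sp i) = M.E)
    (pts : Fin h → X) (δ : ℝ) (hδ : 0 ≤ δ)
    (hclose : ∀ i, ∀ q ∈ Sp i, dist q (pts i) ≤ δ)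
    (B : Fin h → Set X)
    (hBsub : ∀ i, B i ⊆ Sp i)
    (hBind : ∀ i, M.Indep (B i))
    (hBmax : ∀ i, ∀ B'' : Set X, M.Indep B'' → B i ⊆ B'' → B'' ⊆ Sp i → B'' = B i) :
    (∀ C : Set X, M.Indep C → C.Nonempty →
      ∃ C' : Set X, C' ⊆ (⋃ i, B i) ∧ M.Indep C' ∧ C'.Nonempty ∧
        rad M.E C' ≤ rad M.E C + 2 * δ) ∧
    (∀ ε : ℝ, 0 ≤ ε → δ = ε * matroidOpt M →
      ∀ C : Set X, M.Indep C → C.Nonempty → rad M.E C = matroidOpt M →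
        ∃ C' : Set X, C' ⊆ (⋃ i, B i) ∧ M.Indep C' ∧ C'.Nonempty ∧
          rad M.E C' ≤ (1 + 2 * ε) * matroidOpt M) := by
  -- every point of the ground set lies in some part
  have hpart : ∀ ⦃q : X⦄, q ∈ M.E → ∃ i, q ∈ Sp i := by
    intro q hq
    rw [← hcover] at hq
    exact Set.mem_iUnion.mp hq
  -- main exchange lemma
  have main : ∀ n : ℕ, ∀ C : Set X, M.Indep C → (C \ ⋃ i, B i).ncard = n →
      ∃ C' : Set X, C' ⊆ (⋃ i, B i) ∧ M.Indep C' ∧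
        ∀ i, (C ∩ Sp i).Nonempty → (C' ∩ Sp i).Nonempty := by
    intro n
    induction n using Nat.strong_induction_on with
    | _ n ih =>
      intro C hC hcard
      by_cases hsub : C ⊆ ⋃ i, B i
      · exact ⟨C, hsub, hC, fun i hi => hi⟩
      · obtain ⟨c, hcC, hcB⟩ := Set.not_subset.mp hsub
        have hcE : c ∈ M.E := hC.subset_ground hcC
        obtain ⟨i, hci⟩ := hpart hcE
        have hSpE : Sp i ⊆ M.E := by
          rw [← hcover]; exact Set.subset_iUnion _ i
        -- `insert c (B i)` is dependent
        have hdep : ¬ M.Indep (insert c (B i)) := by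
          intro hind
          have := hBmax i (insert c (B i)) hind (Set.subset_insert _ _)
            (Set.insert_subset hci (hBsub i))
          exact hcB (Set.mem_iUnion.mpr ⟨i, this ▸ Set.mem_insert c (B i)⟩)
        have hc_cl : c ∈ M.closure (B i) := by
          rw [(hBind i).mem_closure_iff']
          exact ⟨hcE, fun hind => absurd hind hdep⟩
        -- c not in closure of C \ {c}
        have hc_ncl : c ∉ M.closure (C \ {c}) := hC.notMem_closure_diff_of_mem hcC
        -- find b ∈ B i not in closure of C \ {c}
        have hBncl : ¬ (B i ⊆ M.closure (C \ {c})) := by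
          intro hsub'
          have : M.closure (B i) ⊆ M.closure (C \ {c}) := by
            have := M.closure_subset_closure hsub'
            rwa [M.closure_closure] at this
          exact hc_ncl (this hc_cl)
        obtain ⟨b, hbB, hbncl⟩ := Set.not_subset.mp hBncl
        have hbE : b ∈ M.E := (hBind i).subset_ground hbB
        have hdiff_ind : M.Indep (C \ {c}) := hC.subset Set.diff_subset
        have hbnot : b ∉ C \ {c} := fun hb => hbncl (M.subset_closure _ hdiff_ind.subset_ground hb)
        have hC1 : M.Indep (insert b (C \ {c})) := by
          rw [hdiff_ind.insert_indep_iff]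
          exact Or.inl ⟨hbE, hbncl⟩
        -- cardinality decreases
        have hCfin : C.Finite := hfin.subset hC.subset_ground
        have hbU : b ∈ ⋃ j, B j := Set.mem_iUnion.mpr ⟨i, hbB⟩
        have hset : (insert b (C \ {c}) \ ⋃ j, B j) = (C \ ⋃ j, B j) \ {c} := by
          ext x
          simp only [Set.mem_diff, Set.mem_insert_iff, Set.mem_singleton_iff]
          constructor
          · rintro ⟨(rfl | ⟨hx, hxc⟩), hxB⟩
            · exact absurd hbU hxB
            · exact ⟨⟨hx, hxB⟩, hxc⟩
          · rintro ⟨⟨hx, hxB⟩, hxc⟩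
            exact ⟨Or.inr ⟨hx, hxc⟩, hxB⟩
        have hmem : c ∈ C \ ⋃ j, B j := ⟨hcC, hcB⟩
        have hfin' : (C \ ⋃ j, B j).Finite := hCfin.subset Set.diff_subset
        have hlt : ((C \ ⋃ j, B j) \ {c}).ncard < n := by
          rw [← hcard]
          exact Set.ncard_lt_ncard (Set.sdiff_singleton_ssubset.mpr hmem) hfin'
        obtain ⟨C', hC'sub, hC'ind, hC'hit⟩ :=
          ih _ (by rw [← hset] at hlt; exact hlt) (insert b (C \ {c})) hC1 rfl
        refine ⟨C', hC'sub, hC'ind, fun j hj => hC'hit j ?_⟩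
        obtain ⟨q, hqC, hqj⟩ := hj
        by_cases hqc : q = c
        · subst hqc
          have hij : i = j := by
            by_contra hij
            exact (hdisj i j hij).ne_of_mem hci hqj rfl
          exact ⟨b, Set.mem_insert _ _, hij ▸ hBsub i hbB⟩
        · exact ⟨q, Or.inr ⟨hqC, hqc⟩, hqj⟩
  -- radius comparison lemma
  have radle : ∀ C C' : Set X, M.Indep C → C.Nonempty → C'.Nonempty →
      (∀ i, (C ∩ Sp i).Nonempty → (C' ∩ Sp i).Nonempty) →
      rad M.E C' ≤ rad M.E C + 2 * δ := by
    intro C C' hC hCne hC'ne hhit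
    have hCfin : C.Finite := hfin.subset hC.subset_ground
    have hrad_nonneg : 0 ≤ rad M.E C := by
      obtain ⟨p, hp⟩ := hne
      have h1 : 0 ≤ setDist p C :=
        Real.sInf_nonneg (by rintro x ⟨q, -, rfl⟩; exact dist_nonneg)
      have h2 : setDist p C ≤ rad M.E C :=
        le_csSup ((hfin.image _).bddAbove) ⟨p, hp, rfl⟩
      linarith
    rw [rad]
    apply Real.sSup_le
    · rintro x ⟨p, hp, rfl⟩
      -- find the closest point c ∈ C to p
      have himg : ((dist p) '' C).Nonempty := hCne.image _
      have himgfin : ((dist p) '' C).Finite := hCfin.image _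
      have hmem := himg.csInf_mem himgfin
      obtain ⟨c, hcC, hceq⟩ := hmem
      obtain ⟨i, hci⟩ := hpart (hC.subset_ground hcC)
      obtain ⟨b, hbC', hbi⟩ := hhit i ⟨c, hcC, hci⟩
      have hdb : dist p b ≤ dist p c + 2 * δ := by
        have h1 : dist c (pts i) ≤ δ := hclose i c hci
        have h2 : dist b (pts i) ≤ δ := hclose i b hbi
        calc dist p b ≤ dist p c + dist c b := dist_triangle _ _ _
          _ ≤ dist p c + (dist c (pts i) + dist (pts i) b) := by
              linarith [dist_triangle c (pts i) b]
          _ ≤ dist p c + 2 * δ := by rw [dist_comm (pts i) b]; linarith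
      have h3 : setDist p C' ≤ dist p b := by
        apply csInf_le
        · exact ⟨0, by rintro x ⟨q, -, rfl⟩; exact dist_nonneg⟩
        · exact ⟨b, hbC', rfl⟩
      have h4 : setDist p C ≤ rad M.E C :=
        le_csSup ((hfin.image _).bddAbove) ⟨p, hp, rfl⟩
      have h5 : setDist p C = dist p c := hceq.symm
      calc setDist p C' ≤ dist p b := h3
        _ ≤ dist p c + 2 * δ := hdb
        _ = setDist p C + 2 * δ := by rw [h5]
        _ ≤ rad M.E C + 2 * δ := by linarith
    · linarith
  have part1 : ∀ C : Set X, M.Indep C → C.Nonempty →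
      ∃ C' : Set X, C' ⊆ (⋃ i, B i) ∧ M.Indep C' ∧ C'.Nonempty ∧
        rad M.E C' ≤ rad M.E C + 2 * δ := by
    intro C hC hCne
    obtain ⟨C', hC'sub, hC'ind, hC'hit⟩ := main _ C hC rfl
    obtain ⟨c, hcC⟩ := hCne
    obtain ⟨i, hci⟩ := hpart (hC.subset_ground hcC)
    obtain ⟨b, hbC', -⟩ := hC'hit i ⟨c, hcC, hci⟩
    exact ⟨C', hC'sub, hC'ind, ⟨b, hbC'⟩,
      radle C C' hC ⟨c, hcC⟩ ⟨b, hbC'⟩ hC'hit⟩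
  refine ⟨part1, fun ε hε hδε C hC hCne hCopt => ?_⟩
  obtain ⟨C', h1, h2, h3, h4⟩ := part1 C hC hCne
  refine ⟨C', h1, h2, h3, ?_⟩
  rw [hCopt, hδε] at h4
  calc rad M.E C' ≤ matroidOpt M + 2 * (ε * matroidOpt M) := h4
    _ = (1 + 2 * ε) * matroidOpt M := by ring
end
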